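/- arXiv:1909.13731 — 6 statements merged into one kernel-verified Lean document; each statement's English description precedes it below -/
import Mathlib

section
/- Mass Transport Principle on ℝ^d: Let d ≥ 1 and let π be a (nonnegative, possibly infinite) Borel measure on ℝ^d × ℝ^d that is diagonally invariant. Then for every measurable set A ⊆ ℝ^d with nonempty interior, π(A × ℝ^d) = π(ℝ^d × A), where the equality is between values in [0, ∞]. -/
open MeasureTheory Set
open scoped ENNReal

namespace MTP
variable {d : ℕ}


def Q (d : ℕ) (ε : ℝ) : Set (EuclideanSpace ℝ (Fin d)) := {y | ∀ i, y i ∈ Ico 0 ε}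

def v (d : ℕ) (ε : ℝ) (z : Fin d → ℤ) : EuclideanSpace ℝ (Fin d) := WithLp.toLp 2 (fun i => ε * z i)

def T (d : ℕ) (ε : ℝ) (z : Fin d → ℤ) : Set (EuclideanSpace ℝ (Fin d)) :=
  (fun a => a + v d ε z) '' Q d ε

lemma measurableSet_Q (ε : ℝ) : MeasurableSet (Q d ε) := by
  have : Q d ε = ⋂ i, (fun y : EuclideanSpace ℝ (Fin d) => y i) ⁻¹' Ico 0 ε := by
    ext y; simp [Q]
  rw [this]
  exact MeasurableSet.iInter fun i =>
    ((EuclideanSpace.proj i : EuclideanSpace ℝ (Fin d) →L[ℝ] ℝ).continuous.measurable)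
      measurableSet_Ico

lemma mem_T {ε : ℝ} {z : Fin d → ℤ} {y : EuclideanSpace ℝ (Fin d)} :
    y ∈ T d ε z ↔ ∀ i, ε * z i ≤ y i ∧ y i < ε * z i + ε := by
  constructor
  · rintro ⟨a, ha, rfl⟩ i
    have h := ha i
    simp only [Q, mem_setOf_eq, mem_Ico] at h
    show ε * z i ≤ a i + ε * z i ∧ a i + ε * z i < ε * z i + ε
    constructor <;> linarith [h.1, h.2]
  · intro h
    refine ⟨y - v d ε z, fun i => ?_, by simp⟩
    have : (y - v d ε z) i = y i - ε * z i := rfl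
    rw [mem_Ico, this]
    constructor <;> linarith [(h i).1, (h i).2]

lemma mem_T_iff {ε : ℝ} (hε : 0 < ε) {z : Fin d → ℤ} {y : EuclideanSpace ℝ (Fin d)} :
    y ∈ T d ε z ↔ ∀ i, z i = ⌊y i / ε⌋ := by
  rw [mem_T]
  refine forall_congr' fun i => ?_
  rw [eq_comm, Int.floor_eq_iff]
  constructor
  · rintro ⟨h1, h2⟩
    constructor
    · rwa [le_div_iff₀ hε, mul_comm]
    · rw [div_lt_iff₀ hε]; push_cast; linarith
  · rintro ⟨h1, h2⟩
    rw [le_div_iff₀ hε, mul_comm] at h1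
    rw [div_lt_iff₀ hε] at h2
    push_cast at h2
    exact ⟨h1, by linarith⟩


lemma image_add_eq_preimage (x : EuclideanSpace ℝ (Fin d)) (S : Set (EuclideanSpace ℝ (Fin d))) :
    (fun a => a + x) '' S = (fun a => a - x) ⁻¹' S := by
  ext y
  constructor
  · rintro ⟨a, ha, rfl⟩; simpa using ha
  · intro hy; exact ⟨y - x, hy, by simp⟩

lemma measurableSet_image_add {S : Set (EuclideanSpace ℝ (Fin d))} (hS : MeasurableSet S)
    (x : EuclideanSpace ℝ (Fin d)) : MeasurableSet ((fun a => a + x) '' S) := by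
  rw [image_add_eq_preimage]
  exact (measurable_id.sub_const x) hS

lemma measurableSet_T (ε : ℝ) (z : Fin d → ℤ) : MeasurableSet (T d ε z) :=
  measurableSet_image_add (measurableSet_Q ε) _

lemma iUnion_T {ε : ℝ} (hε : 0 < ε) : (⋃ z : Fin d → ℤ, T d ε z) = univ := by
  refine eq_univ_of_forall fun y => mem_iUnion.2 ⟨fun i => ⌊y i / ε⌋, (mem_T_iff hε).2 fun i => rfl⟩

lemma pairwise_disjoint_T {ε : ℝ} (hε : 0 < ε) :
    Pairwise (Function.onFun Disjoint (T d ε)) := by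
  intro z z' hzz'
  rw [Function.onFun, Set.disjoint_left]
  intro y hy hy'
  exact hzz' (funext fun i => ((mem_T_iff hε).1 hy i).trans (((mem_T_iff hε).1 hy' i)).symm)

lemma norm_le_of_mem_Q {ε : ℝ} (hε : 0 ≤ ε) {y : EuclideanSpace ℝ (Fin d)} (hy : y ∈ Q d ε) :
    ‖y‖ ≤ d * ε := by
  have h1 : ‖y‖ ≤ Real.sqrt (d * ε ^ 2) := by
    rw [EuclideanSpace.norm_eq]
    apply Real.sqrt_le_sqrt
    calc ∑ i, ‖y i‖ ^ 2 ≤ ∑ _i : Fin d, ε ^ 2 := by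
          refine Finset.sum_le_sum fun i _ => ?_
          have h := hy i
          rw [mem_Ico] at h
          rw [Real.norm_eq_abs, abs_of_nonneg h.1]
          exact pow_le_pow_left₀ h.1 h.2.le 2
      _ = d * ε ^ 2 := by simp [mul_comm]
  refine h1.trans ?_
  rw [Real.sqrt_mul (by positivity), Real.sqrt_sq hε]
  have : Real.sqrt d ≤ d := by
    calc Real.sqrt d ≤ Real.sqrt ((d : ℝ) ^ 2) := by
          apply Real.sqrt_le_sqrt
          exact_mod_cast Nat.le_self_pow two_ne_zero d
      _ = d := Real.sqrt_sq (by positivity)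
  exact mul_le_mul_of_nonneg_right this hε

lemma abs_coord_le_norm (y : EuclideanSpace ℝ (Fin d)) (i : Fin d) : |y i| ≤ ‖y‖ := by
  rw [EuclideanSpace.norm_eq]
  calc |y i| = Real.sqrt (‖y i‖ ^ 2) := by
        rw [Real.sqrt_sq_eq_abs, Real.norm_eq_abs, abs_abs]
    _ ≤ Real.sqrt (∑ j, ‖y j‖ ^ 2) := by
        apply Real.sqrt_le_sqrt
        exact Finset.single_le_sum (f := fun j => ‖y j‖ ^ 2) (fun j _ => by positivity) (Finset.mem_univ i)

lemma exists_cover {ε : ℝ} (hε : 0 < ε) (R : ℝ) :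
    ∃ F : Finset (Fin d → ℤ),
      Metric.closedBall (0 : EuclideanSpace ℝ (Fin d)) R ⊆ ⋃ z ∈ F, T d ε z := by
  refine ⟨Fintype.piFinset fun _ => Finset.Icc ⌊(-R) / ε⌋ ⌊R / ε⌋, fun y hy => ?_⟩
  rw [mem_closedBall_zero_iff] at hy
  refine mem_biUnion ?_ ((mem_T_iff hε).2 fun i => rfl)
  refine Fintype.mem_piFinset.mpr fun i => ?_
  have h1 : -R ≤ y i := neg_le_of_abs_le ((abs_coord_le_norm y i).trans hy)
  have h2 : y i ≤ R := le_of_abs_le ((abs_coord_le_norm y i).trans hy)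
  rw [Finset.mem_Icc]
  exact ⟨Int.floor_le_floor (by gcongr), Int.floor_le_floor (by gcongr)⟩


variable {μ : Measure (EuclideanSpace ℝ (Fin d))}

lemma measure_T (hinv : ∀ (x : EuclideanSpace ℝ (Fin d)) (S : Set (EuclideanSpace ℝ (Fin d))),
      MeasurableSet S → μ ((fun a => a + x) '' S) = μ S)
    (ε : ℝ) (z : Fin d → ℤ) : μ (T d ε z) = μ (Q d ε) :=
  hinv _ _ (measurableSet_Q ε)

lemma measure_closedBall_le
    (hinv : ∀ (x : EuclideanSpace ℝ (Fin d)) (S : Set (EuclideanSpace ℝ (Fin d))),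
      MeasurableSet S → μ ((fun a => a + x) '' S) = μ S)
    {ε : ℝ} (hε : 0 < ε) (R : ℝ) :
    ∃ n : ℕ, μ (Metric.closedBall 0 R) ≤ n * μ (Q d ε) := by
  obtain ⟨F, hF⟩ := exists_cover (d := d) hε R
  refine ⟨F.card, (measure_mono hF).trans ?_⟩
  calc μ (⋃ z ∈ F, T d ε z) ≤ ∑ z ∈ F, μ (T d ε z) := measure_biUnion_finset_le F _
    _ = ∑ _z ∈ F, μ (Q d ε) := Finset.sum_congr rfl fun z _ => measure_T hinv ε z
    _ = F.card * μ (Q d ε) := by rw [Finset.sum_const, nsmul_eq_mul]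

lemma measure_Q_top
    (hinv : ∀ (x : EuclideanSpace ℝ (Fin d)) (S : Set (EuclideanSpace ℝ (Fin d))),
      MeasurableSet S → μ ((fun a => a + x) '' S) = μ S)
    (h : μ (Q d 1) = ⊤) {ε : ℝ} (hε : 0 < ε) : μ (Q d ε) = ⊤ := by
  obtain ⟨n, hn⟩ := measure_closedBall_le hinv hε (d * 1)
  have hsub : Q d 1 ⊆ Metric.closedBall (0 : EuclideanSpace ℝ (Fin d)) (d * 1) := fun y hy => by
    rw [Metric.mem_closedBall, dist_zero_right]
    exact norm_le_of_mem_Q one_pos.le hy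
  by_contra hne
  have h2 : μ (Q d 1) ≤ n * μ (Q d ε) := (measure_mono hsub).trans hn
  rw [h, top_le_iff] at h2
  exact ENNReal.mul_ne_top (ENNReal.natCast_ne_top n) hne h2

lemma measure_eq_top_of_interior (hd : 1 ≤ d)
    (hinv : ∀ (x : EuclideanSpace ℝ (Fin d)) (S : Set (EuclideanSpace ℝ (Fin d))),
      MeasurableSet S → μ ((fun a => a + x) '' S) = μ S)
    (h : μ (Q d 1) = ⊤) {A : Set (EuclideanSpace ℝ (Fin d))} (hAint : (interior A).Nonempty) :
    μ A = ⊤ := by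
  obtain ⟨a, ha⟩ := hAint
  obtain ⟨r, hr, hball⟩ := Metric.isOpen_iff.1 isOpen_interior a ha
  have hd0 : (0:ℝ) < d := by exact_mod_cast hd
  set ε := r / (2 * d) with hεdef
  have hε : 0 < ε := by positivity
  have hsub : (fun y => y + a) '' Q d ε ⊆ A := by
    rintro _ ⟨q, hq, rfl⟩
    refine interior_subset (hball ?_)
    rw [Metric.mem_ball]
    have hdist : dist (q + a) a = ‖q‖ := by rw [dist_eq_norm]; simp
    rw [hdist]
    calc ‖q‖ ≤ d * ε := norm_le_of_mem_Q hε.le hq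
      _ = r / 2 := by rw [hεdef]; field_simp
      _ < r := by linarith
  refine top_le_iff.1 ?_
  calc (⊤ : ℝ≥0∞) = μ (Q d ε) := (measure_Q_top hinv h hε).symm
    _ = μ ((fun y => y + a) '' Q d ε) := (hinv a _ (measurableSet_Q ε)).symm
    _ ≤ μ A := measure_mono hsub

lemma finiteOnCompacts
    (hinv : ∀ (x : EuclideanSpace ℝ (Fin d)) (S : Set (EuclideanSpace ℝ (Fin d))),
      MeasurableSet S → μ ((fun a => a + x) '' S) = μ S)
    (h : μ (Q d 1) ≠ ⊤) : IsFiniteMeasureOnCompacts μ := by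
  constructor
  intro K hK
  obtain ⟨R, hR⟩ := hK.isBounded.subset_closedBall 0
  obtain ⟨n, hn⟩ := measure_closedBall_le hinv one_pos R
  calc μ K ≤ μ (Metric.closedBall 0 R) := measure_mono hR
    _ ≤ n * μ (Q d 1) := hn
    _ < ⊤ := ENNReal.mul_lt_top (ENNReal.natCast_lt_top n) h.lt_top

lemma leftInvariant
    (hinv : ∀ (x : EuclideanSpace ℝ (Fin d)) (S : Set (EuclideanSpace ℝ (Fin d))),
      MeasurableSet S → μ ((fun a => a + x) '' S) = μ S) :
    μ.IsAddLeftInvariant := by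
  constructor
  intro g
  ext S hS
  rw [Measure.map_apply (measurable_const_add g) hS]
  have hpre : (fun x => g + x) ⁻¹' S = (fun a => a + (-g)) '' S := by
    rw [image_add_eq_preimage]
    ext x
    simp [sub_neg_eq_add, add_comm]
  rw [hpre, hinv (-g) S hS]

lemma v_neg (z : Fin d → ℤ) : v d 1 (-z) = -(v d 1 z) := by
  refine PiLp.ext fun i => ?_
  show (1:ℝ) * ((-z) i : ℤ) = -((1:ℝ) * (z i : ℤ))
  rw [Pi.neg_apply]
  push_cast
  ring

lemma cube_identity (π : Measure (EuclideanSpace ℝ (Fin d) × EuclideanSpace ℝ (Fin d)))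
    (hdiag : ∀ (x : EuclideanSpace ℝ (Fin d)) (A B : Set (EuclideanSpace ℝ (Fin d))),
      MeasurableSet A → MeasurableSet B →
      π (A ×ˢ B) = π (((fun a => a + x) '' A) ×ˢ ((fun b => b + x) '' B))) :
    π (Q d 1 ×ˢ univ) = π (univ ×ˢ Q d 1) := by
  have hU : (⋃ z : Fin d → ℤ, T d 1 z) = univ := iUnion_T one_pos
  have h1 : ∀ z : Fin d → ℤ, π (Q d 1 ×ˢ T d 1 z) = π (T d 1 (-z) ×ˢ Q d 1) := by
    intro z
    have hx := hdiag (-(v d 1 z)) (Q d 1) (T d 1 z) (measurableSet_Q 1) (measurableSet_T 1 z)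
    have hs1 : (fun a => a + -(v d 1 z)) '' Q d 1 = T d 1 (-z) := by
      rw [T, v_neg]
    have hs2 : (fun b => b + -(v d 1 z)) '' T d 1 z = Q d 1 := by
      rw [T, Set.image_image]
      simp
    rw [hs1, hs2] at hx
    exact hx
  have hdisj1 : Pairwise (Function.onFun Disjoint (fun z : Fin d → ℤ => Q d 1 ×ˢ T d 1 z)) := by
    intro z z' hzz'
    have hT := pairwise_disjoint_T (d := d) one_pos hzz'
    rw [Function.onFun, Set.disjoint_left] at hT ⊢
    rintro ⟨p1, p2⟩ hp hp'
    exact hT hp.2 hp'.2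
  have hdisj2 : Pairwise (Function.onFun Disjoint (fun z : Fin d → ℤ => T d 1 z ×ˢ Q d 1)) := by
    intro z z' hzz'
    have hT := pairwise_disjoint_T (d := d) one_pos hzz'
    rw [Function.onFun, Set.disjoint_left] at hT ⊢
    rintro ⟨p1, p2⟩ hp hp'
    exact hT hp.1 hp'.1
  calc π (Q d 1 ×ˢ univ) = π (⋃ z : Fin d → ℤ, Q d 1 ×ˢ T d 1 z) := by
        rw [← Set.prod_iUnion, hU]
    _ = ∑' z : Fin d → ℤ, π (Q d 1 ×ˢ T d 1 z) :=
        measure_iUnion hdisj1 fun z => (measurableSet_Q 1).prod (measurableSet_T 1 z)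
    _ = ∑' z : Fin d → ℤ, π (T d 1 (-z) ×ˢ Q d 1) := tsum_congr h1
    _ = ∑' z : Fin d → ℤ, π (T d 1 z ×ˢ Q d 1) :=
        (Equiv.neg (Fin d → ℤ)).tsum_eq fun z => π (T d 1 z ×ˢ Q d 1)
    _ = π (⋃ z : Fin d → ℤ, T d 1 z ×ˢ Q d 1) :=
        (measure_iUnion hdisj2 fun z => (measurableSet_T 1 z).prod (measurableSet_Q 1)).symm
    _ = π (univ ×ˢ Q d 1) := by rw [← Set.iUnion_prod_const, hU]

lemma volume_Q_pos : 0 < volume (Q d (1:ℝ)) := by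
  have hsub : {y : EuclideanSpace ℝ (Fin d) | ∀ i, y i ∈ Ioo (0:ℝ) 1} ⊆ Q d 1 :=
    fun y hy i => ⟨(hy i).1.le, (hy i).2⟩
  have hopen : IsOpen {y : EuclideanSpace ℝ (Fin d) | ∀ i, y i ∈ Ioo (0:ℝ) 1} := by
    have heq : {y : EuclideanSpace ℝ (Fin d) | ∀ i, y i ∈ Ioo (0:ℝ) 1}
        = ⋂ i, (fun y : EuclideanSpace ℝ (Fin d) => y i) ⁻¹' Ioo (0:ℝ) 1 := by
      ext y; simp
    rw [heq]
    exact isOpen_iInter_of_finite fun i =>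
      IsOpen.preimage (EuclideanSpace.proj i : EuclideanSpace ℝ (Fin d) →L[ℝ] ℝ).continuous
        isOpen_Ioo
  have hne : {y : EuclideanSpace ℝ (Fin d) | ∀ i, y i ∈ Ioo (0:ℝ) 1}.Nonempty :=
    ⟨(WithLp.toLp 2 (fun _ => (1/2 : ℝ)) : EuclideanSpace ℝ (Fin d)), fun i => by norm_num⟩
  exact lt_of_lt_of_le (hopen.measure_pos volume hne) (measure_mono hsub)

lemma volume_Q_ne_top : volume (Q d (1:ℝ)) ≠ ⊤ := by
  have hsub : Q d 1 ⊆ Metric.closedBall (0 : EuclideanSpace ℝ (Fin d)) (d * 1) := fun y hy => by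
    rw [Metric.mem_closedBall, dist_zero_right]
    exact norm_le_of_mem_Q one_pos.le hy
  exact ((measure_mono hsub).trans_lt (isCompact_closedBall _ _).measure_lt_top).ne

end MTP

open MTP

/-- **Mass Transport Principle on ℝ^d.**  If `π` is a diagonally invariant Borel measure on
`ℝ^d × ℝ^d` (i.e. `π (A ×ˢ B) = π ((A + x) ×ˢ (B + x))` for every `x` and all measurable
`A`, `B`), then for every measurable set `A` with nonempty interior the outgoing mass equals
the incoming mass: `π (A ×ˢ univ) = π (univ ×ˢ A)`. -/
theorem mass_transport_principle
    (d : ℕ) (hd : 1 ≤ d)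
    (π : Measure (EuclideanSpace ℝ (Fin d) × EuclideanSpace ℝ (Fin d)))
    (hdiag : ∀ (x : EuclideanSpace ℝ (Fin d)) (A B : Set (EuclideanSpace ℝ (Fin d))),
      MeasurableSet A → MeasurableSet B →
      π (A ×ˢ B) = π (((fun a => a + x) '' A) ×ˢ ((fun b => b + x) '' B)))
    (A : Set (EuclideanSpace ℝ (Fin d))) (hA : MeasurableSet A)
    (hAint : (interior A).Nonempty) :
    π (A ×ˢ (univ : Set (EuclideanSpace ℝ (Fin d)))) =
      π ((univ : Set (EuclideanSpace ℝ (Fin d))) ×ˢ A) := by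
  have himguniv : ∀ x : EuclideanSpace ℝ (Fin d),
      (fun b => b + x) '' (univ : Set (EuclideanSpace ℝ (Fin d))) = univ := by
    intro x
    ext y
    simp only [image_univ, mem_range, mem_univ, iff_true]
    exact ⟨y - x, by simp⟩
  have hμ₁ : ∀ S : Set (EuclideanSpace ℝ (Fin d)), MeasurableSet S →
      (π.map Prod.fst) S = π (S ×ˢ univ) := by
    intro S hS
    rw [Measure.map_apply measurable_fst hS, Set.prod_univ]
  have hμ₂ : ∀ S : Set (EuclideanSpace ℝ (Fin d)), MeasurableSet S →
      (π.map Prod.snd) S = π (univ ×ˢ S) := by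
    intro S hS
    rw [Measure.map_apply measurable_snd hS, Set.univ_prod]
  have hinv₁ : ∀ (x : EuclideanSpace ℝ (Fin d)) (S : Set (EuclideanSpace ℝ (Fin d))),
      MeasurableSet S → (π.map Prod.fst) ((fun a => a + x) '' S) = (π.map Prod.fst) S := by
    intro x S hS
    have h := hdiag x S univ hS MeasurableSet.univ
    rw [himguniv x] at h
    rw [hμ₁ _ (measurableSet_image_add hS x), hμ₁ _ hS, h]
  have hinv₂ : ∀ (x : EuclideanSpace ℝ (Fin d)) (S : Set (EuclideanSpace ℝ (Fin d))),
      MeasurableSet S → (π.map Prod.snd) ((fun a => a + x) '' S) = (π.map Prod.snd) S := by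
    intro x S hS
    have h := hdiag x univ S MeasurableSet.univ hS
    rw [himguniv x] at h
    rw [hμ₂ _ (measurableSet_image_add hS x), hμ₂ _ hS, h]
  have hQ1 : MeasurableSet (Q d (1:ℝ)) := measurableSet_Q 1
  have key : (π.map Prod.fst) (Q d 1) = (π.map Prod.snd) (Q d 1) := by
    rw [hμ₁ _ hQ1, hμ₂ _ hQ1]
    exact cube_identity π hdiag
  rw [← hμ₁ A hA, ← hμ₂ A hA]
  rcases eq_top_or_lt_top ((π.map Prod.fst) (Q d 1)) with htop | hfin
  · rw [measure_eq_top_of_interior hd hinv₁ htop hAint,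
      measure_eq_top_of_interior hd hinv₂ (key ▸ htop) hAint]
  · haveI := leftInvariant hinv₁
    haveI := leftInvariant hinv₂
    haveI := finiteOnCompacts hinv₁ hfin.ne
    haveI := finiteOnCompacts hinv₂ (key ▸ hfin).ne
    have e1 := Measure.isAddLeftInvariant_eq_smul (π.map Prod.fst)
      (volume : Measure (EuclideanSpace ℝ (Fin d)))
    have e2 := Measure.isAddLeftInvariant_eq_smul (π.map Prod.snd)
      (volume : Measure (EuclideanSpace ℝ (Fin d)))
    have hc : (Measure.addHaarScalarFactor (π.map Prod.fst)
          (volume : Measure (EuclideanSpace ℝ (Fin d))) : ℝ≥0∞)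
        = (Measure.addHaarScalarFactor (π.map Prod.snd)
          (volume : Measure (EuclideanSpace ℝ (Fin d))) : ℝ≥0∞) := by
      have hkey := key
      rw [e1, e2] at hkey
      simp only [Measure.smul_apply, smul_eq_mul] at hkey
      exact (ENNReal.mul_left_inj volume_Q_pos.ne' volume_Q_ne_top).1 hkey
    rw [e1, e2]
    simp only [Measure.smul_apply, ENNReal.smul_def, smul_eq_mul]
    rw [hc]
end

section
/- Let d ≥ 1 and p ≥ 1, and let Λ ⊆ ℝ^d be a measurable set. Then ∫_Λ ‖x‖^p dx ≥ (d/(p + d)) · ϑ(d)^{−p/d} · Leb(Λ)^{1 + p/d}, where ‖·‖ is the Euclidean norm, Leb is d-dimensional Lebesgue measure, ϑ(d) = Leb(B(0,1)) is the volume of the Euclidean unit ball in ℝ^d, and the inequality is understood in [0, ∞]. Equivalently, Leb(Λ)^{1+p/d} ≤ (1 + p/d) · ϑ(d)^{p/d} · ∫_Λ ‖x‖^p dx. -/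
open MeasureTheory Set

lemma ball_integral_eq (d : ℕ) (hd : 1 ≤ d) (p : ℝ) (hp : 1 ≤ p) (r : ℝ) (hr : 0 < r) :
    ∫ x in Metric.ball (0 : EuclideanSpace ℝ (Fin d)) r, ‖x‖ ^ p
      = d * (volume (Metric.ball (0 : EuclideanSpace ℝ (Fin d)) 1)).toReal
          * (r ^ ((d : ℝ) + p) / ((d : ℝ) + p)) := by
  haveI : Nonempty (Fin d) := ⟨⟨0, hd⟩⟩
  haveI : Nontrivial (EuclideanSpace ℝ (Fin d)) := inferInstance
  have hdim : Module.finrank ℝ (EuclideanSpace ℝ (Fin d)) = d := finrank_euclideanSpace_fin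
  have key := integral_fun_norm_addHaar (volume : Measure (EuclideanSpace ℝ (Fin d)))
      ((Iio r).indicator fun y : ℝ => y ^ p)
  rw [hdim] at key
  have h1 : ∫ x in Metric.ball (0 : EuclideanSpace ℝ (Fin d)) r, ‖x‖ ^ p
      = ∫ x : EuclideanSpace ℝ (Fin d), (Iio r).indicator (fun y : ℝ => y ^ p) ‖x‖ := by
    rw [← integral_indicator measurableSet_ball]
    congr 1
    funext x
    simp [indicator, mem_ball_zero_iff]
  have h2 : ∫ y in Ioi (0:ℝ), y ^ (d - 1) • (Iio r).indicator (fun y : ℝ => y ^ p) y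
      = ∫ y in Ioo (0:ℝ) r, y ^ ((d:ℝ) - 1 + p) := by
    have : ∀ y : ℝ, y ^ (d - 1) • (Iio r).indicator (fun y : ℝ => y ^ p) y
        = (Iio r).indicator (fun y : ℝ => y ^ (d-1) * y ^ p) y := by
      intro y
      simp only [indicator_apply, smul_eq_mul]
      split <;> simp
    simp_rw [this]
    rw [setIntegral_indicator measurableSet_Iio, Ioi_inter_Iio]
    refine setIntegral_congr_fun measurableSet_Ioo fun y hy => ?_
    rw [← Real.rpow_natCast y (d-1), ← Real.rpow_add hy.1]
    congr 1
    push_cast [Nat.cast_sub hd]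
    ring
  have hd1 : (1:ℝ) ≤ (d:ℝ) := by exact_mod_cast hd
  have h3 : ∫ y in Ioo (0:ℝ) r, y ^ ((d:ℝ) - 1 + p) = r ^ ((d:ℝ) + p) / ((d:ℝ) + p) := by
    rw [Measure.restrict_congr_set Ioo_ae_eq_Ioc, ← intervalIntegral.integral_of_le hr.le,
      integral_rpow (Or.inl (by linarith))]
    rw [Real.zero_rpow (by linarith)]
    ring_nf
  rw [h1, key, h2, h3]
  simp only [nsmul_eq_mul, smul_eq_mul, Measure.real]
  ring

lemma ball_lintegral_eq (d : ℕ) (hd : 1 ≤ d) (p : ℝ) (hp : 1 ≤ p) (r : ℝ) (hr : 0 < r) :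
    ∫⁻ x in Metric.ball (0 : EuclideanSpace ℝ (Fin d)) r, ENNReal.ofReal (‖x‖ ^ p)
      = ENNReal.ofReal (d * (volume (Metric.ball (0 : EuclideanSpace ℝ (Fin d)) 1)).toReal
          * (r ^ ((d : ℝ) + p) / ((d : ℝ) + p))) := by
  have hcont : Continuous fun x : EuclideanSpace ℝ (Fin d) => ‖x‖ ^ p :=
    continuous_norm.rpow_const fun x => Or.inr (by linarith)
  have hint : IntegrableOn (fun x : EuclideanSpace ℝ (Fin d) => ‖x‖ ^ p)
      (Metric.ball 0 r) volume := by
    refine Measure.integrableOn_of_bounded measure_ball_lt_top.ne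
      hcont.measurable.aestronglyMeasurable (M := r ^ p) ?_
    filter_upwards [ae_restrict_mem measurableSet_ball] with x hx
    rw [Real.norm_of_nonneg (by positivity)]
    exact Real.rpow_le_rpow (norm_nonneg x) (mem_ball_zero_iff.mp hx).le (by linarith)
  rw [← ofReal_integral_eq_lintegral_ofReal hint
      (Filter.Eventually.of_forall fun x => by positivity),
    ball_integral_eq d hd p hp r hr]


/-- Among all measurable sets `Λ ⊆ ℝ^d`, the centered ball minimizes `∫_Λ ‖x‖^p dx`:
`∫_Λ ‖x‖^p dx ≥ (d/(p+d)) · ϑ(d)^(−p/d) · Leb(Λ)^(1+p/d)`, where `ϑ(d)` is the volume of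
the Euclidean unit ball. The inequality is understood in `[0, ∞]`. -/

theorem lintegral_norm_rpow_ge_of_measure
    (d : ℕ) (hd : 1 ≤ d) (p : ℝ) (hp : 1 ≤ p)
    (Λ : Set (EuclideanSpace ℝ (Fin d))) (hΛ : MeasurableSet Λ) :
    ENNReal.ofReal ((d : ℝ) / (p + d)) *
        (volume (Metric.ball (0 : EuclideanSpace ℝ (Fin d)) 1)) ^ (-(p / d)) *
        (volume Λ) ^ (1 + p / d)
      ≤ ∫⁻ x in Λ, ENNReal.ofReal (‖x‖ ^ p) := by
  haveI : Nonempty (Fin d) := ⟨⟨0, hd⟩⟩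
  haveI : Nontrivial (EuclideanSpace ℝ (Fin d)) := inferInstance
  have hd1 : (1:ℝ) ≤ (d:ℝ) := by exact_mod_cast hd
  have hpd : (0:ℝ) ≤ p / d := div_nonneg (by linarith) (by linarith)
  set ϑ := volume (Metric.ball (0 : EuclideanSpace ℝ (Fin d)) 1) with hϑdef
  have hϑ0 : ϑ ≠ 0 := (Metric.measure_ball_pos volume _ one_pos).ne'
  have hϑtop : ϑ ≠ ⊤ := measure_ball_lt_top.ne
  rcases eq_or_ne (volume Λ) 0 with h0 | h0
  · rw [h0, ENNReal.zero_rpow_of_pos (by linarith), mul_zero]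
    exact bot_le
  rcases eq_or_ne (volume Λ) ⊤ with htop | htop
  · refine le_trans ?_ (lintegral_mono_set (diff_subset (t := Metric.ball 0 1)))
    have hsub : volume (Λ \ Metric.ball (0 : EuclideanSpace ℝ (Fin d)) 1) = ⊤ := by
      by_contra h
      have hsubset : Λ ⊆ (Λ \ Metric.ball (0 : EuclideanSpace ℝ (Fin d)) 1) ∪
          Metric.ball (0 : EuclideanSpace ℝ (Fin d)) 1 := by
        intro x hx
        by_cases hb : x ∈ Metric.ball (0 : EuclideanSpace ℝ (Fin d)) 1
        · exact Or.inr hb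
        · exact Or.inl ⟨hx, hb⟩
      have hle : volume Λ ≤ volume (Λ \ Metric.ball (0 : EuclideanSpace ℝ (Fin d)) 1) + ϑ :=
        (measure_mono hsubset).trans (measure_union_le _ _)
      rw [htop] at hle
      exact absurd (le_antisymm le_top hle) (by simp [ENNReal.add_ne_top, h, hϑtop])
    have : (⊤ : ENNReal) ≤ ∫⁻ x in Λ \ Metric.ball (0 : EuclideanSpace ℝ (Fin d)) 1,
        ENNReal.ofReal (‖x‖ ^ p) := by
      calc (⊤ : ENNReal) = 1 * volume (Λ \ Metric.ball (0 : EuclideanSpace ℝ (Fin d)) 1) := by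
            rw [hsub]; simp
        _ = ∫⁻ _ in Λ \ Metric.ball (0 : EuclideanSpace ℝ (Fin d)) 1, (1:ENNReal) :=
            (setLIntegral_const _ _).symm
        _ ≤ _ := by
            refine setLIntegral_mono' (hΛ.diff measurableSet_ball) fun x hx => ?_
            have h1 : (1:ℝ) ≤ ‖x‖ := by
              have := hx.2; rw [mem_ball_zero_iff, not_lt] at this; exact this
            calc (1:ENNReal) = ENNReal.ofReal ((1:ℝ) ^ p) := by simp
              _ ≤ _ := ENNReal.ofReal_le_ofReal
                  (Real.rpow_le_rpow zero_le_one h1 (by linarith))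
    exact le_top.trans this
  · -- main case
    set vr := (volume Λ).toReal with hvrdef
    have hvr : 0 < vr := ENNReal.toReal_pos h0 htop
    set ϑr := ϑ.toReal with hϑrdef
    have hϑr : 0 < ϑr := ENNReal.toReal_pos hϑ0 hϑtop
    set r := (vr / ϑr) ^ ((d:ℝ)⁻¹) with hrdef
    have hr : 0 < r := Real.rpow_pos_of_pos (div_pos hvr hϑr) _
    have hrd : r ^ d = vr / ϑr := Real.rpow_inv_natCast_pow (div_pos hvr hϑr).le (by omega)
    have hball : volume (Metric.ball (0 : EuclideanSpace ℝ (Fin d)) r) = volume Λ := by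
      rw [Measure.addHaar_ball _ _ hr.le, finrank_euclideanSpace_fin, hrd,
        ENNReal.ofReal_div_of_pos hϑr, ENNReal.ofReal_toReal htop, ENNReal.ofReal_toReal hϑtop,
        ← hϑdef, ENNReal.div_mul_cancel hϑ0 hϑtop]
    set f : EuclideanSpace ℝ (Fin d) → ENNReal := fun x => ENNReal.ofReal (‖x‖ ^ p) with hfdef
    have hfm : Measurable f :=
      (continuous_norm.rpow_const fun x => Or.inr (by linarith)).measurable.ennreal_ofReal
    set B := Metric.ball (0 : EuclideanSpace ℝ (Fin d)) r with hBdef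
    have hABfin : volume (Λ ∩ B) ≠ ⊤ :=
      fun h => htop (le_antisymm le_top (h ▸ measure_mono inter_subset_left))
    have hAB : volume (Λ \ B) = volume (B \ Λ) := by
      have h1 : volume (Λ \ (Λ ∩ B)) = volume Λ - volume (Λ ∩ B) :=
        measure_diff inter_subset_left (hΛ.inter measurableSet_ball).nullMeasurableSet hABfin
      have h2 : volume (B \ (B ∩ Λ)) = volume B - volume (B ∩ Λ) :=
        measure_diff inter_subset_left (measurableSet_ball.inter hΛ).nullMeasurableSet
          (by rwa [inter_comm])
      rw [diff_self_inter] at h1 h2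
      rw [h1, h2, hball, inter_comm]
    have key : ∫⁻ x in B \ Λ, f x ≤ ∫⁻ x in Λ \ B, f x := by
      calc ∫⁻ x in B \ Λ, f x ≤ ∫⁻ _ in B \ Λ, ENNReal.ofReal (r ^ p) := by
            refine setLIntegral_mono measurable_const fun x hx => ?_
            exact ENNReal.ofReal_le_ofReal
              (Real.rpow_le_rpow (norm_nonneg x) (mem_ball_zero_iff.mp hx.1).le (by linarith))
        _ = ENNReal.ofReal (r ^ p) * volume (Λ \ B) := by rw [setLIntegral_const, hAB]
        _ = ∫⁻ _ in Λ \ B, ENNReal.ofReal (r ^ p) := (setLIntegral_const _ _).symm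
        _ ≤ _ := by
            refine setLIntegral_mono hfm fun x hx => ?_
            have : r ≤ ‖x‖ := by
              have := hx.2; rw [hBdef, mem_ball_zero_iff, not_lt] at this; exact this
            exact ENNReal.ofReal_le_ofReal (Real.rpow_le_rpow hr.le this (by linarith))
    have stepA : ∫⁻ x in B, f x ≤ ∫⁻ x in Λ, f x := by
      rw [← lintegral_inter_add_diff f B hΛ, ← lintegral_inter_add_diff f Λ measurableSet_ball,
        inter_comm B Λ]
      exact add_le_add_right key _
    refine le_trans (le_of_eq ?_) stepA
    rw [hBdef, ball_lintegral_eq d hd p hp r hr, ← hϑdef, ← hϑrdef]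
    rw [← ENNReal.ofReal_toReal htop, ← ENNReal.ofReal_toReal hϑtop, ← hvrdef, ← hϑrdef,
      ENNReal.ofReal_rpow_of_pos hϑr, ENNReal.ofReal_rpow_of_pos hvr,
      ← ENNReal.ofReal_mul (by positivity), ← ENNReal.ofReal_mul (by positivity)]
    congr 1
    have hrdp : r ^ ((d:ℝ) + p) = (vr / ϑr) ^ (1 + p / d) := by
      rw [hrdef, ← Real.rpow_mul (div_pos hvr hϑr).le]
      congr 1
      field_simp
    rw [hrdp, Real.div_rpow hvr.le hϑr.le, Real.rpow_neg hϑr.le,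
      show (1 : ℝ) + p / d = p / d + 1 by ring, Real.rpow_add hϑr (p/d) 1, Real.rpow_one]
    field_simp
    ring
end

section
/- Let z₁, z₂, z₃ ∈ ℍ be such that z₂, viewed as a complex number, lies on the Euclidean segment joining z₁ and z₃ (i.e. z₂ ∈ [z₁, z₃] in ℂ). Then the hyperbolic distances satisfy dist(z₁, z₂) ≤ dist(z₁, z₃). -/
open scoped UpperHalfPlane

/-- If `z₂`, viewed as a complex number, lies on the Euclidean segment joining `z₁` and `z₃`,
then the hyperbolic distances satisfy `dist z₁ z₂ ≤ dist z₁ z₃`. -/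
theorem UpperHalfPlane.dist_le_of_mem_segment (z₁ z₂ z₃ : ℍ)
    (h : (z₂ : ℂ) ∈ segment ℝ (z₁ : ℂ) (z₃ : ℂ)) :
    dist z₁ z₂ ≤ dist z₁ z₃ := by
  obtain ⟨a, b, ha, hb, hab, heq⟩ := h
  have hb1 : b ≤ 1 := by linarith
  have him : z₂.im = a * z₁.im + b * z₃.im := by
    have := congrArg Complex.im heq
    simpa [UpperHalfPlane.coe_im] using this.symm
  have hd12 : dist (z₁ : ℂ) (z₂ : ℂ) = b * dist (z₁ : ℂ) (z₃ : ℂ) := by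
    rw [Complex.dist_eq, Complex.dist_eq, ← heq]
    have : (z₁ : ℂ) - (a • (z₁ : ℂ) + b • (z₃ : ℂ)) = (b : ℂ) * ((z₁ : ℂ) - z₃) := by
      simp only [smul_eq_mul, Complex.real_smul]
      have : (a : ℂ) + b = 1 := by exact_mod_cast congrArg Complex.ofReal hab
      linear_combination (-(z₁ : ℂ)) * this
    rw [this, norm_mul, Complex.norm_real, Real.norm_of_nonneg hb]
  rw [UpperHalfPlane.dist_eq, UpperHalfPlane.dist_eq]
  gcongr 2 * Real.arsinh ?_
  rw [hd12]
  have h1 : (0:ℝ) < z₁.im := z₁.im_pos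
  have h2 : (0:ℝ) < z₂.im := z₂.im_pos
  have h3 : (0:ℝ) < z₃.im := z₃.im_pos
  have key : b * Real.sqrt (z₁.im * z₃.im) ≤ Real.sqrt (z₁.im * z₂.im) := by
    rw [← Real.sqrt_sq hb, ← Real.sqrt_mul (sq_nonneg b)]
    apply Real.sqrt_le_sqrt
    rw [him]
    nlinarith [mul_nonneg (mul_nonneg hb (sub_nonneg.2 hb1)) (mul_pos h1 h3).le, mul_nonneg (mul_nonneg ha h1.le) h1.le]
  rw [div_le_div_iff₀ (by positivity) (by positivity)]
  calc b * dist (z₁ : ℂ) (z₃ : ℂ) * (2 * Real.sqrt (z₁.im * z₃.im))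
      = dist (z₁ : ℂ) (z₃ : ℂ) * 2 * (b * Real.sqrt (z₁.im * z₃.im)) := by ring
    _ ≤ dist (z₁ : ℂ) (z₃ : ℂ) * 2 * Real.sqrt (z₁.im * z₂.im) := by
        gcongr
    _ = dist (z₁ : ℂ) (z₃ : ℂ) * (2 * Real.sqrt (z₁.im * z₂.im)) := by ring
end

section
/- Horodistance function of the point at infinity in the half-plane model: Let z = x + i y ∈ ℍ. Then dist(z, z′) − dist(i, z′) converges to −log y as z′ → ∞ in ℍ, where the limit is taken along the filter of points z′ ∈ ℍ whose complex modulus |z′| tends to +∞. (In other words, the horodistance function of the point at infinity ∞, with base point i, is H_∞(x + i y) = −log y.) -/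
open Filter
open scoped UpperHalfPlane Topology

private lemma sqrt_tendsto_atTop : Tendsto Real.sqrt atTop atTop := by
  apply tendsto_atTop_atTop.2
  intro b
  refine ⟨max 0 b ^ 2, fun a ha => le_trans (le_max_right 0 b) ?_⟩
  rw [← Real.sqrt_sq (le_max_left 0 b)]
  exact Real.sqrt_le_sqrt ha

private lemma arsinh_sub_log :
    Tendsto (fun x : ℝ => Real.arsinh x - Real.log x) atTop (𝓝 (Real.log 2)) := by
  have h1 : Tendsto (fun x : ℝ => 1 + x⁻¹ ^ 2) atTop (𝓝 1) := by
    simpa using (tendsto_const_nhds (x := (1:ℝ))).add (tendsto_inv_atTop_zero.pow 2)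
  have hs : Tendsto (fun x : ℝ => Real.sqrt (1 + x⁻¹ ^ 2)) atTop (𝓝 1) := by
    have := (Real.continuous_sqrt.tendsto 1).comp h1
    rw [Real.sqrt_one] at this; exact this
  have h2 : Tendsto (fun x : ℝ => 1 + Real.sqrt (1 + x⁻¹ ^ 2)) atTop (𝓝 2) := by
    rw [show (2:ℝ) = 1 + 1 by norm_num]
    exact (tendsto_const_nhds (x := (1:ℝ))).add hs
  have hlog : Tendsto (fun x : ℝ => Real.log (1 + Real.sqrt (1 + x⁻¹ ^ 2))) atTop
      (𝓝 (Real.log 2)) := (Real.continuousAt_log (by norm_num)).tendsto.comp h2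
  apply hlog.congr'
  filter_upwards [eventually_gt_atTop (0:ℝ)] with x hx
  have hx0 : x ≠ 0 := ne_of_gt hx
  have hkey : x + Real.sqrt (1 + x ^ 2) = x * (1 + Real.sqrt (1 + x⁻¹ ^ 2)) := by
    rw [mul_add, mul_one]
    congr 1
    rw [← Real.sqrt_sq hx.le, ← Real.sqrt_mul (sq_nonneg x)]
    congr 1
    field_simp
    simp only [Real.sqrt_sq hx.le]; ring
  have hpos : (0:ℝ) < 1 + Real.sqrt (1 + x⁻¹ ^ 2) := by positivity
  rw [Real.arsinh, hkey, Real.log_mul hx0 (ne_of_gt hpos), add_sub_cancel_left]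

private lemma dist_div_sqrt_atTop (w : ℍ) :
    Tendsto (fun z' : ℍ => dist (w : ℂ) (z' : ℂ) / (2 * Real.sqrt (w.im * z'.im)))
      (Filter.comap (fun z' : ℍ => ‖(z' : ℂ)‖) atTop) atTop := by
  set L := Filter.comap (fun z' : ℍ => ‖(z' : ℂ)‖) atTop
  have T : Tendsto (fun z' : ℍ => ‖(z' : ℂ)‖) L atTop := tendsto_comap
  have hlow : Tendsto
      (fun z' : ℍ => (Real.sqrt (‖(z' : ℂ)‖) - ‖(w : ℂ)‖) /
        (2 * Real.sqrt w.im)) L atTop := by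
    apply Tendsto.atTop_div_const (mul_pos two_pos (Real.sqrt_pos.2 w.im_pos))
    exact tendsto_atTop_add_const_right _ _ (sqrt_tendsto_atTop.comp T)
  apply tendsto_atTop_mono' L _ hlow
  filter_upwards [T.eventually_ge_atTop (max 1 (‖(w : ℂ)‖ ^ 2))] with z' hz'
  set t := ‖(z' : ℂ)‖ with ht
  have ht1 : (1:ℝ) ≤ t := le_trans (le_max_left _ _) hz'
  have htw2 : ‖(w : ℂ)‖ ^ 2 ≤ t := le_trans (le_max_right _ _) hz'
  have him : z'.im ≤ t := by
    calc z'.im ≤ |(z' : ℂ).im| := by rw [UpperHalfPlane.coe_im]; exact le_abs_self _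
    _ ≤ t := Complex.abs_im_le_norm _
  have hwim : 0 < w.im := w.im_pos
  have hzim : 0 < z'.im := z'.im_pos
  have hdist : t - ‖(w : ℂ)‖ ≤ dist (w : ℂ) (z' : ℂ) := by
    have h := norm_add_le ((z' : ℂ) - (w : ℂ)) (w : ℂ)
    rw [sub_add_cancel] at h
    rw [dist_comm, Complex.dist_eq]
    linarith
  have hsq : Real.sqrt (w.im * z'.im) ≤ Real.sqrt w.im * Real.sqrt t := by
    rw [Real.sqrt_mul hwim.le]
    exact mul_le_mul_of_nonneg_left (Real.sqrt_le_sqrt him) (Real.sqrt_nonneg _)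
  rw [div_le_div_iff₀ (by positivity) (by positivity)]
  have hst : Real.sqrt t * Real.sqrt t = t := Real.mul_self_sqrt (by linarith)
  have hst1 : (1:ℝ) ≤ Real.sqrt t := by
    rw [show (1:ℝ) = Real.sqrt 1 by simp]; exact Real.sqrt_le_sqrt ht1
  have hwa : (0:ℝ) ≤ ‖(w : ℂ)‖ := norm_nonneg _
  have hsw : (0:ℝ) ≤ Real.sqrt w.im := Real.sqrt_nonneg _
  have hsub : ‖(w : ℂ)‖ ≤ Real.sqrt t := by
    rw [show t = Real.sqrt t * Real.sqrt t from hst.symm] at htw2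
    nlinarith [Real.sqrt_nonneg t]
  have hq : 0 ≤ Real.sqrt (w.im * z'.im) := Real.sqrt_nonneg _
  have hcs : ‖(w : ℂ)‖ ≤ ‖(w : ℂ)‖ * Real.sqrt t := by nlinarith
  calc (Real.sqrt t - ‖(w : ℂ)‖) * (2 * Real.sqrt (w.im * z'.im))
      ≤ (Real.sqrt t - ‖(w : ℂ)‖) * (2 * (Real.sqrt w.im * Real.sqrt t)) := by
        apply mul_le_mul_of_nonneg_left (by linarith) (by linarith)
    _ = 2 * Real.sqrt w.im * (Real.sqrt t * Real.sqrt t)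
        - 2 * Real.sqrt w.im * (‖(w : ℂ)‖ * Real.sqrt t) := by ring
    _ = 2 * Real.sqrt w.im * t
        - 2 * Real.sqrt w.im * (‖(w : ℂ)‖ * Real.sqrt t) := by rw [hst]
    _ ≤ 2 * Real.sqrt w.im * t - 2 * Real.sqrt w.im * ‖(w : ℂ)‖ := by nlinarith
    _ = 2 * Real.sqrt w.im * (t - ‖(w : ℂ)‖) := by ring
    _ ≤ 2 * Real.sqrt w.im * dist (w : ℂ) (z' : ℂ) := by nlinarith
    _ = dist (w : ℂ) (z' : ℂ) * (2 * Real.sqrt w.im) := by ring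

private lemma abs_ratio_tendsto (w v : ℂ) :
    Tendsto (fun z' : ℍ => ‖(z' : ℂ) - w‖ / ‖(z' : ℂ) - v‖)
      (Filter.comap (fun z' : ℍ => ‖(z' : ℂ)‖) atTop) (𝓝 1) := by
  set L := Filter.comap (fun z' : ℍ => ‖(z' : ℂ)‖) atTop
  have T : Tendsto (fun z' : ℍ => ‖(z' : ℂ)‖) L atTop := tendsto_comap
  have hv : Tendsto (fun z' : ℍ => ‖(z' : ℂ) - v‖) L atTop := by
    apply tendsto_atTop_mono _ (tendsto_atTop_add_const_right _ (-(‖v‖)) T)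
    intro z'
    have h := norm_add_le ((z' : ℂ) - v) v
    rw [sub_add_cancel] at h
    linarith
  have h0 : Tendsto
      (fun z' : ℍ => (‖(z' : ℂ) - w‖ - ‖(z' : ℂ) - v‖) /
        ‖(z' : ℂ) - v‖) L (𝓝 0) := by
    refine squeeze_zero_norm (fun z' => ?_)
      ((tendsto_const_nhds (x := ‖v - w‖)).div_atTop hv)
    ·
      rw [Real.norm_eq_abs, abs_div, abs_of_nonneg (norm_nonneg _)]
      rcases eq_or_lt_of_le (norm_nonneg ((z' : ℂ) - v)) with h | h
      · rw [← h]; simp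
      · apply div_le_div_of_nonneg_right ?_ h.le |>.trans_eq rfl
        calc |‖(z' : ℂ) - w‖ - ‖(z' : ℂ) - v‖|
            ≤ ‖((z' : ℂ) - w) - ((z' : ℂ) - v)‖ :=
              abs_norm_sub_norm_le _ _
          _ = ‖v - w‖ := by ring_nf
  have h1 := h0.add (tendsto_const_nhds (x := (1:ℝ)))
  rw [zero_add] at h1
  apply h1.congr'
  filter_upwards [hv.eventually_ge_atTop 1] with z' hz'
  have hne : ‖(z' : ℂ) - v‖ ≠ 0 := by linarith
  field_simp
  ring

/-- **Horodistance function of the point at infinity in the half-plane model.**  For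
`z = x + i y ∈ ℍ`, the quantity `dist z z′ − dist i z′` converges to `−log y` as `z′ → ∞`
in `ℍ` (along the filter of points whose complex modulus tends to `+∞`). -/
theorem UpperHalfPlane.horodistance_infty (z : ℍ) :
    Tendsto (fun z' : ℍ => dist z z' - dist UpperHalfPlane.I z')
      (Filter.comap (fun z' : ℍ => ‖(z' : ℂ)‖) atTop)
      (𝓝 (-Real.log z.im)) := by
  set L := Filter.comap (fun z' : ℍ => ‖(z' : ℂ)‖) atTop with hL
  set y := z.im with hy
  have hy0 : 0 < y := z.im_pos
  set A : ℍ → ℝ := fun z' => dist (z : ℂ) (z' : ℂ) / (2 * Real.sqrt (z.im * z'.im)) with hA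
  set B : ℍ → ℝ := fun z' =>
    dist (UpperHalfPlane.I : ℂ) (z' : ℂ) /
      (2 * Real.sqrt ((UpperHalfPlane.I : ℍ).im * z'.im)) with hB
  have hAtop : Tendsto A L atTop := dist_div_sqrt_atTop z
  have hBtop : Tendsto B L atTop := dist_div_sqrt_atTop UpperHalfPlane.I
  have hgA : Tendsto (fun z' => Real.arsinh (A z') - Real.log (A z')) L (𝓝 (Real.log 2)) :=
    arsinh_sub_log.comp hAtop
  have hgB : Tendsto (fun z' => Real.arsinh (B z') - Real.log (B z')) L (𝓝 (Real.log 2)) :=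
    arsinh_sub_log.comp hBtop
  -- the ratio A/B tends to (√y)⁻¹
  have hratio : Tendsto (fun z' => A z' / B z') L (𝓝 ((Real.sqrt y)⁻¹)) := by
    have heq : ∀ z' : ℍ, A z' / B z' =
        (‖(z' : ℂ) - (z : ℂ)‖ / ‖(z' : ℂ) - (UpperHalfPlane.I : ℂ)‖) *
          (Real.sqrt y)⁻¹ := by
      intro z'
      have hzim : 0 < z'.im := z'.im_pos
      have hs' : Real.sqrt z'.im ≠ 0 := by positivity
      have hsy : Real.sqrt y ≠ 0 := by positivity
      simp only [hA, hB, UpperHalfPlane.I_im, one_mul, Complex.dist_eq]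
      rw [Real.sqrt_mul hy0.le, div_div_div_comm]
      rw [show ‖(z:ℂ) - (z':ℂ)‖ = ‖(z':ℂ) - (z:ℂ)‖ by
        rw [← norm_neg]; ring_nf]
      rw [show ‖(UpperHalfPlane.I:ℂ) - (z':ℂ)‖
          = ‖(z':ℂ) - (UpperHalfPlane.I:ℂ)‖ by
        rw [← norm_neg]; ring_nf]
      congr 1
      rw [div_eq_iff (by positivity)]
      ring
    have h1 : Tendsto
        (fun z' : ℍ => ‖(z' : ℂ) - (z : ℂ)‖ /
          ‖(z' : ℂ) - (UpperHalfPlane.I : ℂ)‖) L (𝓝 1) :=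
      abs_ratio_tendsto (z : ℂ) (UpperHalfPlane.I : ℂ)
    have := h1.mul_const ((Real.sqrt y)⁻¹)
    rw [one_mul] at this
    exact this.congr fun z' => (heq z').symm
  have hsy : Real.sqrt y ≠ 0 := by positivity
  have hlogr : Tendsto (fun z' => Real.log (A z' / B z')) L (𝓝 (Real.log ((Real.sqrt y)⁻¹))) :=
    (Real.continuousAt_log (inv_ne_zero hsy)).tendsto.comp hratio
  -- combine
  have hF : Tendsto (fun z' : ℍ =>
      2 * ((Real.arsinh (A z') - Real.log (A z')) - (Real.arsinh (B z') - Real.log (B z'))) +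
        2 * Real.log (A z' / B z')) L (𝓝 (-Real.log y)) := by
    have := ((hgA.sub hgB).const_mul 2).add (hlogr.const_mul 2)
    have hval : 2 * (Real.log 2 - Real.log 2) + 2 * Real.log ((Real.sqrt y)⁻¹) = -Real.log y := by
      rw [Real.log_inv, Real.log_sqrt hy0.le]; ring
    rwa [hval] at this
  apply hF.congr'
  filter_upwards [hAtop.eventually_ge_atTop 1, hBtop.eventually_ge_atTop 1] with z' hA1 hB1
  have hA0 : (0:ℝ) < A z' := by linarith
  have hB0 : (0:ℝ) < B z' := by linarith
  rw [UpperHalfPlane.dist_eq z z', UpperHalfPlane.dist_eq UpperHalfPlane.I z',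
    Real.log_div (ne_of_gt hA0) (ne_of_gt hB0)]
  simp only [hA, hB]
  ring
end

section
/- Geodesic polar coordinates in the hyperbolic plane: For every z₀ ∈ ℍ and every measurable function f : [0, ∞) → [0, ∞], ∫_ℍ f(dist(z, z₀)) dμ_ℍ(z) = 2π · ∫₀^∞ f(ρ) · sinh(ρ) dρ, where both sides are Lebesgue integrals with values in [0, ∞]. -/
open MeasureTheory Set Real
open scoped UpperHalfPlane ENNReal

noncomputable instance : MeasurableSpace ℍ := borel ℍ
instance : BorelSpace ℍ := ⟨rfl⟩

/-- The hyperbolic area measure on `ℍ`: the measure with density `1 / (Im z)²` with respect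
to two-dimensional Lebesgue measure. -/
noncomputable def hypMeasure : Measure ℍ :=
  Measure.comap (fun z : ℍ => (z : ℂ))
    ((volume : Measure ℂ).withDensity fun z => ENNReal.ofReal (1 / z.im ^ 2))

lemma ftc_disc (b R : ℝ) (hR : 0 < R) (hRb : R < b) :
    ∫ y in (b - R)..(b + R), 2 * Real.sqrt (R ^ 2 - (y - b) ^ 2) / y ^ 2
      = 2 * π * (b / Real.sqrt (b ^ 2 - R ^ 2) - 1) := by
  have hb : 0 < b := hR.trans hRb
  have hD2 : (0:ℝ) < b ^ 2 - R ^ 2 := by nlinarith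
  set D := Real.sqrt (b ^ 2 - R ^ 2) with hD
  have hDpos : 0 < D := Real.sqrt_pos.2 hD2
  have hDsq : D ^ 2 = b ^ 2 - R ^ 2 := Real.sq_sqrt hD2.le
  set F : ℝ → ℝ := fun y =>
    2 * (-(Real.sqrt (R ^ 2 - (y - b) ^ 2) / y) - Real.arcsin ((y - b) / R)
      + (b / D) * Real.arcsin ((R ^ 2 + b * (y - b)) / (R * y))) with hF
  have key : ∀ y ∈ Ioo (b - R) (b + R),
      HasDerivAt F (2 * Real.sqrt (R ^ 2 - (y - b) ^ 2) / y ^ 2) y := by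
    intro y hy
    obtain ⟨hy1, hy2⟩ := hy
    have hy0 : 0 < y := by linarith
    have hs : (0:ℝ) < R ^ 2 - (y - b) ^ 2 := by nlinarith
    set S := Real.sqrt (R ^ 2 - (y - b) ^ 2) with hS
    have hSpos : 0 < S := Real.sqrt_pos.2 hs
    have hSsq : S ^ 2 = R ^ 2 - (y - b) ^ 2 := Real.sq_sqrt hs.le
    -- inner sqrt
    have h1 : HasDerivAt (fun y : ℝ => R ^ 2 - (y - b) ^ 2)
        (-(2 * (y - b) ^ 1 * 1)) y :=
      (((hasDerivAt_id y).sub_const b).pow 2).const_sub (R ^ 2)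
    have h2 : HasDerivAt (fun y : ℝ => Real.sqrt (R ^ 2 - (y - b) ^ 2))
        (1 / (2 * S) * -(2 * (y - b) ^ 1 * 1)) y :=
      (Real.hasDerivAt_sqrt hs.ne').comp y h1
    have h3 : HasDerivAt (fun y : ℝ => Real.sqrt (R ^ 2 - (y - b) ^ 2) / y)
        ((1 / (2 * S) * -(2 * (y - b) ^ 1 * 1) * y - S * 1) / y ^ 2) y :=
      h2.div (hasDerivAt_id y) hy0.ne'
    -- first arcsin
    have hu1 : (y - b) / R < 1 := by rw [div_lt_one hR]; linarith
    have hu2 : -1 < (y - b) / R := by rw [lt_div_iff₀ hR]; linarith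
    have h4i : HasDerivAt (fun y : ℝ => (y - b) / R) (1 / R) y := by
      simpa using ((hasDerivAt_id y).sub_const b).div_const R
    have h4 : HasDerivAt (fun y : ℝ => Real.arcsin ((y - b) / R))
        (1 / Real.sqrt (1 - ((y - b) / R) ^ 2) * (1 / R)) y :=
      by exact (Real.hasDerivAt_arcsin hu2.ne' hu1.ne).comp y h4i
    -- second arcsin
    have hg2 : (R ^ 2 + b * (y - b)) ^ 2 < (R * y) ^ 2 := by nlinarith
    have hgabs : |(R ^ 2 + b * (y - b)) / (R * y)| < 1 := by
      rw [abs_div, div_lt_one (by positivity)]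
      rw [← Real.sqrt_sq_eq_abs, ← Real.sqrt_sq_eq_abs]
      exact Real.sqrt_lt_sqrt (sq_nonneg _) hg2
    obtain ⟨hg1, hg1'⟩ := abs_lt.1 hgabs
    have h5n : HasDerivAt (fun y : ℝ => R ^ 2 + b * (y - b)) (b * 1) y :=
      (((hasDerivAt_id y).sub_const b).const_mul b).const_add (R ^ 2)
    have h5d : HasDerivAt (fun y : ℝ => R * y) R y := by
      simpa using (hasDerivAt_id y).const_mul R
    have h5i : HasDerivAt (fun y : ℝ => (R ^ 2 + b * (y - b)) / (R * y))
        ((b * 1 * (R * y) - (R ^ 2 + b * (y - b)) * R) / (R * y) ^ 2) y :=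
      h5n.div h5d (by positivity)
    have h5 : HasDerivAt (fun y : ℝ => Real.arcsin ((R ^ 2 + b * (y - b)) / (R * y)))
        (1 / Real.sqrt (1 - ((R ^ 2 + b * (y - b)) / (R * y)) ^ 2) *
          ((b * 1 * (R * y) - (R ^ 2 + b * (y - b)) * R) / (R * y) ^ 2)) y :=
      by exact (Real.hasDerivAt_arcsin hg1.ne' hg1'.ne).comp y h5i
    have hcomb := (((h3.neg.sub h4).add (h5.const_mul (b / D))).const_mul 2)
    convert hcomb using 1
    · rfl
    · rfl
    · rfl
    have e1 : Real.sqrt (1 - ((y - b) / R) ^ 2) = S / R := by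
      rw [show (1 - ((y - b) / R) ^ 2 : ℝ) = (R ^ 2 - (y - b) ^ 2) / R ^ 2 by
        field_simp]
      rw [Real.sqrt_div hs.le, Real.sqrt_sq hR.le]
    have e2 : Real.sqrt (1 - ((R ^ 2 + b * (y - b)) / (R * y)) ^ 2)
        = S * D / (R * y) := by
      rw [show (1 - ((R ^ 2 + b * (y - b)) / (R * y)) ^ 2 : ℝ)
          = (R ^ 2 - (y - b) ^ 2) * (b ^ 2 - R ^ 2) / (R * y) ^ 2 by
        field_simp; ring]
      rw [Real.sqrt_div (by positivity), Real.sqrt_sq (by positivity),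
        Real.sqrt_mul hs.le]
    rw [e1, e2]
    field_simp
    ring_nf
    linear_combination (y*b) * hDsq
  have hcont : ContinuousOn F (Icc (b - R) (b + R)) := by
    have hy0 : ∀ y ∈ Icc (b - R) (b + R), y ≠ 0 := fun y hy => by
      have := hy.1; intro h; rw [h] at this; linarith
    apply ContinuousOn.mul continuousOn_const
    apply ContinuousOn.add
    apply ContinuousOn.sub
    · exact ((Real.continuous_sqrt.comp (by fun_prop)).continuousOn.div
        continuousOn_id hy0).neg
    · exact (Real.continuous_arcsin.comp (by fun_prop)).continuousOn
    · exact continuousOn_const.mul (Real.continuous_arcsin.comp_continuousOn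
        (ContinuousOn.div (by fun_prop) (by fun_prop)
          (fun y hy => mul_ne_zero hR.ne' (hy0 y hy))))
  have hint : IntervalIntegrable
      (fun y => 2 * Real.sqrt (R ^ 2 - (y - b) ^ 2) / y ^ 2) volume (b - R) (b + R) := by
    apply ContinuousOn.intervalIntegrable
    rw [uIcc_of_le (by linarith)]
    apply ContinuousOn.div (by fun_prop)
    · fun_prop
    · intro y hy
      have h1 := hy.1
      have h2 : 0 < y := by linarith
      exact (pow_pos h2 2).ne'
  rw [intervalIntegral.integral_eq_sub_of_hasDerivAt_of_le (by linarith) hcont key hint]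
  have ha1 : ((b + R) - b) / R = 1 := by field_simp; ring
  have ha2 : ((b - R) - b) / R = -1 := by field_simp; ring
  have hb1 : (R ^ 2 + b * ((b + R) - b)) / (R * (b + R)) = 1 := by
    field_simp; ring
  have hb2 : (R ^ 2 + b * ((b - R) - b)) / (R * (b - R)) = -1 := by
    rw [div_eq_iff (mul_ne_zero hR.ne' (by linarith : (b:ℝ) - R ≠ 0))]; ring
  simp only [hF, ha1, ha2, hb1, hb2, Real.arcsin_one, Real.arcsin_neg_one,
    show R ^ 2 - ((b + R) - b) ^ 2 = 0 by ring, show R ^ 2 - ((b - R) - b) ^ 2 = 0 by ring,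
    Real.sqrt_zero, zero_div, neg_zero]
  field_simp
  ring

lemma coe_mEmbedding : MeasurableEmbedding ((↑) : ℍ → ℂ) :=
  UpperHalfPlane.isOpenEmbedding_coe.measurableEmbedding

lemma hypMeasure_apply (s : Set ℍ) :
    hypMeasure s
      = ((volume : Measure ℂ).withDensity fun z => ENNReal.ofReal (1 / z.im ^ 2))
          ((fun z : ℍ => (z : ℂ)) '' s) :=
  coe_mEmbedding.comap_apply _ _

lemma image_closedBall (z₀ : ℍ) (r : ℝ) :
    (fun z : ℍ => (z : ℂ)) '' Metric.closedBall z₀ r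
      = Metric.closedBall ((z₀.center r : ℍ) : ℂ) (z₀.im * Real.sinh r) := by
  ext w
  simp only [mem_image, Metric.mem_closedBall]
  constructor
  · rintro ⟨z, hz, rfl⟩
    exact UpperHalfPlane.dist_le_iff_dist_coe_center_le.1 hz
  · intro hw
    have him : 0 < w.im := by
      have h1 : |w.im - z₀.im * Real.cosh r| ≤ z₀.im * Real.sinh r := by
        have := Complex.abs_im_le_norm (w - ((z₀.center r : ℍ) : ℂ))
        rw [Complex.sub_im] at this
        have h2 : ((z₀.center r : ℍ) : ℂ).im = z₀.im * Real.cosh r := rfl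
        rw [h2] at this
        calc |w.im - z₀.im * Real.cosh r| ≤ ‖w - ((z₀.center r : ℍ) : ℂ)‖ := this
          _ ≤ z₀.im * Real.sinh r := by rwa [← Complex.dist_eq]
      have h3 := abs_le.1 h1
      have h4 : z₀.im * (Real.cosh r - Real.sinh r) ≤ w.im := by nlinarith [h3.1]
      have h5 : 0 < Real.cosh r - Real.sinh r := by
        rw [Real.cosh_sub_sinh]; positivity
      nlinarith [z₀.im_pos]
    exact ⟨⟨w, him⟩, UpperHalfPlane.dist_le_iff_dist_coe_center_le.2 hw, rfl⟩

lemma slab_volume (a t : ℝ) : (volume {x : ℝ | (x - a) ^ 2 ≤ t})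
    = ENNReal.ofReal (2 * Real.sqrt t) := by
  rcases lt_or_ge t 0 with ht | ht
  · have : {x : ℝ | (x - a) ^ 2 ≤ t} = ∅ := by
      ext x; simp only [mem_setOf_eq, mem_empty_iff_false, iff_false]
      intro h; nlinarith [sq_nonneg (x - a)]
    rw [this, measure_empty, Real.sqrt_eq_zero_of_nonpos ht.le]
    simp
  · have : {x : ℝ | (x - a) ^ 2 ≤ t} = Icc (a - Real.sqrt t) (a + Real.sqrt t) := by
      ext x
      simp only [mem_setOf_eq, mem_Icc]
      rw [← Real.sqrt_le_sqrt_iff ht, Real.sqrt_sq_eq_abs, abs_le]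
      constructor <;> intro h <;> exact ⟨by linarith [h.1, h.2], by linarith [h.1, h.2]⟩
    rw [this, Real.volume_Icc]
    congr 1; ring

lemma disc_measure (a c R : ℝ) (hR : 0 < R) (hRc : R < c) :
    ((volume : Measure ℂ).withDensity fun z => ENNReal.ofReal (1 / z.im ^ 2))
        (Metric.closedBall (⟨a, c⟩ : ℂ) R)
      = ENNReal.ofReal (2 * π * (c / Real.sqrt (c ^ 2 - R ^ 2) - 1)) := by
  have hc : 0 < c := hR.trans hRc
  set H : ℝ × ℝ → ℝ≥0∞ := fun p =>
    Set.indicator {q : ℝ × ℝ | (q.1 - a) ^ 2 + (q.2 - c) ^ 2 ≤ R ^ 2}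
      (fun q => ENNReal.ofReal (1 / q.2 ^ 2)) p with hHdef
  have hH : Measurable H := by
    apply Measurable.indicator
    · fun_prop
    · exact measurableSet_le (by fun_prop) measurable_const
  rw [withDensity_apply _ measurableSet_closedBall,
    ← lintegral_indicator measurableSet_closedBall]
  have hcomp : ∀ w : ℂ,
      (Metric.closedBall (⟨a, c⟩ : ℂ) R).indicator
        (fun z : ℂ => ENNReal.ofReal (1 / z.im ^ 2)) w
        = H (Complex.measurableEquivRealProd w) := by
    intro w
    have hmem : w ∈ Metric.closedBall (⟨a, c⟩ : ℂ) R ↔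
        (w.re - a) ^ 2 + (w.im - c) ^ 2 ≤ R ^ 2 := by
      rw [Metric.mem_closedBall, Complex.dist_eq_re_im]
      constructor
      · intro h
        have h1 := Real.sq_sqrt (by positivity : (0:ℝ) ≤ (w.re - a) ^ 2 + (w.im - c) ^ 2)
        have h2 := Real.sqrt_nonneg ((w.re - a) ^ 2 + (w.im - c) ^ 2)
        nlinarith
      · intro h
        calc Real.sqrt ((w.re - a) ^ 2 + (w.im - c) ^ 2) ≤ Real.sqrt (R ^ 2) :=
              Real.sqrt_le_sqrt h
          _ = R := Real.sqrt_sq hR.le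
    by_cases h : w ∈ Metric.closedBall (⟨a, c⟩ : ℂ) R
    · rw [indicator_of_mem h]
      simp only [hHdef, Complex.measurableEquivRealProd_apply]
      rw [indicator_of_mem (by exact hmem.1 h)]
    · rw [indicator_of_notMem h]
      simp only [hHdef, Complex.measurableEquivRealProd_apply]
      rw [indicator_of_notMem (by exact fun hh => h (hmem.2 hh))]
  calc ∫⁻ w : ℂ, (Metric.closedBall (⟨a, c⟩ : ℂ) R).indicator
        (fun z : ℂ => ENNReal.ofReal (1 / z.im ^ 2)) w
      = ∫⁻ w : ℂ, H (Complex.measurableEquivRealProd w) := by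
        exact lintegral_congr hcomp
    _ = ∫⁻ p : ℝ × ℝ, H p := Complex.volume_preserving_equiv_real_prod.lintegral_comp hH
    _ = ∫⁻ y : ℝ, ∫⁻ x : ℝ, H (x, y) := by
        rw [Measure.volume_eq_prod, lintegral_prod_symm' _ hH]
    _ = ∫⁻ y : ℝ, ENNReal.ofReal (2 * Real.sqrt (R ^ 2 - (y - c) ^ 2) / y ^ 2) := by
        apply lintegral_congr
        intro y
        have hptw : ∀ x : ℝ, H (x, y) = ({x : ℝ | (x - a) ^ 2 ≤ R ^ 2 - (y - c) ^ 2}).indicator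
            (fun _ => ENNReal.ofReal (1 / y ^ 2)) x := by
          intro x
          simp only [hHdef]
          by_cases h : (x - a) ^ 2 + (y - c) ^ 2 ≤ R ^ 2
          · rw [indicator_of_mem (by exact h), indicator_of_mem (by simp only [mem_setOf_eq]; linarith)]
          · rw [indicator_of_notMem (by exact h),
              indicator_of_notMem (by simp only [mem_setOf_eq]; intro hh; exact h (by linarith))]
        simp_rw [hptw]
        rw [lintegral_indicator_const (measurableSet_le (by fun_prop) measurable_const),
          slab_volume, ← ENNReal.ofReal_mul (by positivity)]
        congr 1
        ring
    _ = ∫⁻ y : ℝ, (Icc (c - R) (c + R)).indicator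
          (fun y => ENNReal.ofReal (2 * Real.sqrt (R ^ 2 - (y - c) ^ 2) / y ^ 2)) y := by
        apply lintegral_congr
        intro y
        by_cases h : y ∈ Icc (c - R) (c + R)
        · rw [indicator_of_mem h]
        · rw [indicator_of_notMem h]
          have : R ^ 2 - (y - c) ^ 2 ≤ 0 := by
            simp only [mem_Icc, not_and_or, not_le] at h
            rcases h with h | h <;> nlinarith
          rw [Real.sqrt_eq_zero_of_nonpos this]
          simp
    _ = ENNReal.ofReal (2 * π * (c / Real.sqrt (c ^ 2 - R ^ 2) - 1)) := by
        rw [lintegral_indicator measurableSet_Icc]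
        have hcontg : ContinuousOn
            (fun y : ℝ => 2 * Real.sqrt (R ^ 2 - (y - c) ^ 2) / y ^ 2) (Icc (c - R) (c + R)) := by
          apply ContinuousOn.div (by fun_prop) (by fun_prop)
          intro y hy
          have h1 := hy.1
          have h2 : 0 < y := by linarith
          exact (pow_pos h2 2).ne'
        rw [← ofReal_integral_eq_lintegral_ofReal (hcontg.integrableOn_Icc)
          (Filter.Eventually.of_forall (fun y => by positivity))]
        rw [MeasureTheory.integral_Icc_eq_integral_Ioc,
          ← intervalIntegral.integral_of_le (by linarith)]
        rw [ftc_disc c R hR hRc]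

lemma hypMeasure_closedBall (z₀ : ℍ) (r : ℝ) (hr : 0 < r) :
    hypMeasure (Metric.closedBall z₀ r)
      = ENNReal.ofReal (2 * π * (Real.cosh r - 1)) := by
  rw [hypMeasure_apply, image_closedBall]
  have hc : ((z₀.center r : ℍ) : ℂ) = (⟨z₀.re, z₀.im * Real.cosh r⟩ : ℂ) := by
    apply Complex.ext <;> rfl
  rw [hc, disc_measure _ _ _ (by positivity) ?hlt]
  case hlt =>
    have := Real.sinh_lt_cosh r  -- might not exist; check
    nlinarith [z₀.im_pos]
  have h1 : (z₀.im * Real.cosh r) ^ 2 - (z₀.im * Real.sinh r) ^ 2 = z₀.im ^ 2 := by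
    have := Real.cosh_sq_sub_sinh_sq r
    nlinarith
  rw [h1, Real.sqrt_sq z₀.im_pos.le]
  congr 1
  rw [mul_comm z₀.im, mul_div_assoc, div_self z₀.im_pos.ne', mul_one]

lemma hypMeasure_singleton (z₀ : ℍ) : hypMeasure {z₀} = 0 := by
  rw [hypMeasure_apply, image_singleton,
    withDensity_apply _ (measurableSet_singleton _)]
  exact setLIntegral_measure_zero _ _ (measure_singleton _)

lemma hypMeasure_closedBall' (z₀ : ℍ) (t : ℝ) :
    hypMeasure (Metric.closedBall z₀ t)
      = ENNReal.ofReal (2 * π * (Real.cosh (max t 0) - 1)) := by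
  rcases lt_trichotomy t 0 with h | h | h
  · rw [Metric.closedBall_eq_empty.2 h, measure_empty, max_eq_right h.le]
    simp
  · subst h
    rw [Metric.closedBall_zero, hypMeasure_singleton]
    simp
  · rw [max_eq_left h.le]
    exact hypMeasure_closedBall z₀ t h

lemma map_dist_eq (z₀ : ℍ) :
    Measure.map (fun z : ℍ => dist z z₀) hypMeasure
      = (volume.restrict (Ioi (0:ℝ))).withDensity
          (fun ρ => ENNReal.ofReal (2 * π * Real.sinh ρ)) := by
  have hdm : Measurable (fun z : ℍ => dist z z₀) :=
    (continuous_id.dist continuous_const).measurable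
  have hval : ∀ a b : ℝ, a < b →
      Measure.map (fun z : ℍ => dist z z₀) hypMeasure (Ioc a b)
        = ENNReal.ofReal (2 * π * (Real.cosh (max b 0) - Real.cosh (max a 0))) := by
    intro a b hab
    rw [Measure.map_apply hdm measurableSet_Ioc]
    have hpre : (fun z : ℍ => dist z z₀) ⁻¹' Ioc a b
        = Metric.closedBall z₀ b \ Metric.closedBall z₀ a := by
      ext z
      simp only [mem_preimage, mem_Ioc, mem_diff, Metric.mem_closedBall, not_le]
      tauto
    rw [hpre, measure_diff (Metric.closedBall_subset_closedBall hab.le)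
      measurableSet_closedBall.nullMeasurableSet
      (by rw [hypMeasure_closedBall']; exact ENNReal.ofReal_ne_top),
      hypMeasure_closedBall', hypMeasure_closedBall',
      ← ENNReal.ofReal_sub _ (by nlinarith [Real.one_le_cosh (max a 0), Real.pi_pos])]
    congr 1
    ring
  refine Measure.ext_of_Ioc' _ _ (fun a b hab => by rw [hval a b hab]; exact ENNReal.ofReal_ne_top)
    (fun a b hab => ?_)
  rw [hval a b hab, withDensity_apply _ measurableSet_Ioc,
    Measure.restrict_restrict measurableSet_Ioc]
  have hinter : Ioc a b ∩ Ioi 0 = Ioc (max a 0) b := by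
    ext x
    simp only [mem_inter_iff, mem_Ioc, mem_Ioi, max_lt_iff]
    tauto
  rw [hinter]
  rcases le_or_gt b (max a 0) with hb | hb
  · rw [Ioc_eq_empty (by exact fun h => absurd hb (not_le.2 h)), Measure.restrict_empty,
      lintegral_zero_measure]
    have hb0 : b ≤ 0 := by
      rcases le_max_iff.1 hb with h | h
      · linarith
      · exact h
    rw [max_eq_right hb0, max_eq_right (by linarith : a ≤ 0)]
    simp
  · have h0m : 0 ≤ max a 0 := le_max_right a 0
    rw [← ofReal_integral_eq_lintegral_ofReal]
    · rw [← intervalIntegral.integral_of_le hb.le, intervalIntegral.integral_const_mul,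
        intervalIntegral.integral_eq_sub_of_hasDerivAt (fun x _ => Real.hasDerivAt_cosh x)
          (Continuous.intervalIntegrable (by fun_prop) _ _),
        max_eq_left (by linarith : (0:ℝ) ≤ b)]
    · exact (Continuous.integrableOn_Ioc (by fun_prop))
    · filter_upwards [ae_restrict_mem measurableSet_Ioc] with x hx
      have : 0 ≤ Real.sinh x := Real.sinh_nonneg_iff.2 (le_of_lt (lt_of_le_of_lt h0m hx.1))
      positivity

/-- **Geodesic polar coordinates in the hyperbolic plane.**  For every `z₀ ∈ ℍ` and every
measurable `f : [0, ∞) → [0, ∞]`,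
`∫_ℍ f (dist z z₀) dμ_ℍ = 2π · ∫₀^∞ f ρ · sinh ρ dρ`. -/
theorem hypMeasure_lintegral_polar (z₀ : ℍ) (f : ℝ → ℝ≥0∞) (hf : Measurable f) :
    ∫⁻ z, f (dist z z₀) ∂hypMeasure =
      ENNReal.ofReal (2 * π) * ∫⁻ ρ in Ioi (0 : ℝ), f ρ * ENNReal.ofReal (Real.sinh ρ) := by
  have hdm : Measurable (fun z : ℍ => dist z z₀) :=
    (continuous_id.dist continuous_const).measurable
  rw [← lintegral_map hf hdm, map_dist_eq z₀,
    lintegral_withDensity_eq_lintegral_mul _ (by fun_prop) hf]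
  have hptw : ∀ ρ : ℝ, ((fun ρ => ENNReal.ofReal (2 * π * Real.sinh ρ)) * f) ρ
      = ENNReal.ofReal (2 * π) * (f ρ * ENNReal.ofReal (Real.sinh ρ)) := by
    intro ρ
    simp only [Pi.mul_apply]
    rw [ENNReal.ofReal_mul (by positivity)]
    ring
  rw [lintegral_congr hptw, lintegral_const_mul' _ _ ENNReal.ofReal_ne_top]
end

section
/- Lower bound for the volume of upper half-balls: For every z₀ ∈ ℍ there exists ρ₀ > 0 such that for all ρ ≥ ρ₀, μ_ℍ( B⁺(z₀, ρ) ) ≥ e^{ρ/3}, where B⁺(z₀, ρ) = {z ∈ ℍ : dist(z, z₀) < ρ and Im z > Im z₀} is the part of the open hyperbolic ball of center z₀ and radius ρ lying strictly above the horizontal line through z₀. -/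
open MeasureTheory Real
open scoped UpperHalfPlane

/-- **Lower bound for the volume of upper half-balls.**  For every `z₀ ∈ ℍ` there is `ρ₀ > 0`
such that for all `ρ ≥ ρ₀`, `μ_ℍ (B⁺(z₀, ρ)) ≥ e^{ρ/3}`, where `B⁺(z₀, ρ)` is the part of
the open hyperbolic ball of center `z₀` and radius `ρ` lying strictly above the horizontal
line through `z₀`. -/
theorem hypMeasure_upper_half_ball_ge (z₀ : ℍ) :
    ∃ ρ₀ > (0 : ℝ), ∀ ρ ≥ ρ₀,
      ENNReal.ofReal (Real.exp (ρ / 3)) ≤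
        hypMeasure {z : ℍ | dist z z₀ < ρ ∧ z₀.im < z.im} := by
  refine ⟨12, by norm_num, fun ρ hρ => ?_⟩
  have hy₀ : 0 < z₀.im := z₀.im_pos
  set y₀ : ℝ := z₀.im with hy₀def
  set a : ℝ := y₀ * Real.sinh (ρ / 2) with hadef
  have hsinh1 : (1 : ℝ) ≤ Real.sinh (ρ / 2) := by
    have h6 : (0:ℝ) < ρ / 2 := by linarith
    have := Real.self_lt_sinh_iff.mpr h6
    linarith
  have hay : y₀ ≤ a := by nlinarith
  have ha : 0 < a := lt_of_lt_of_le hy₀ hay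
  -- the rectangle in ℂ
  set T : Set ℂ :=
    {w : ℂ | w.re ∈ Set.Ioo (z₀.re - a) (z₀.re + a) ∧ w.im ∈ Set.Ioo y₀ (2 * y₀)} with hTdef
  have hTmeas : MeasurableSet T := by
    apply MeasurableSet.inter
    · exact Complex.measurable_re measurableSet_Ioo
    · exact Complex.measurable_im measurableSet_Ioo
  -- the rectangle in ℍ
  set R : Set ℍ := ((↑) : ℍ → ℂ) ⁻¹' T with hRdef
  have hRsub : R ⊆ {z : ℍ | dist z z₀ < ρ ∧ z₀.im < z.im} := by
    rintro z ⟨⟨hre1, hre2⟩, him1, him2⟩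
    simp only [UpperHalfPlane.coe_re, UpperHalfPlane.coe_im] at hre1 hre2 him1 him2
    refine ⟨?_, him1⟩
    rw [UpperHalfPlane.dist_eq]
    have hzim : 0 < z.im := z.im_pos
    have hsq : y₀ ≤ Real.sqrt (z.im * y₀) :=
      (Real.le_sqrt hy₀.le (by nlinarith)).mpr (by nlinarith)
    have hdistC : dist (z : ℂ) (z₀ : ℂ) < a + y₀ := by
      have h1 : |(z : ℂ).re - (z₀ : ℂ).re| < a := by
        rw [abs_lt]
        constructor <;> simp only [UpperHalfPlane.coe_re] <;> linarith
      have h2 : |(z : ℂ).im - (z₀ : ℂ).im| < y₀ := by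
        rw [abs_lt]
        constructor <;> simp only [UpperHalfPlane.coe_im] <;> linarith
      calc dist (z : ℂ) (z₀ : ℂ) = ‖(z : ℂ) - (z₀ : ℂ)‖ := Complex.dist_eq _ _
        _ ≤ |((z : ℂ) - (z₀ : ℂ)).re| + |((z : ℂ) - (z₀ : ℂ)).im| :=
            Complex.norm_le_abs_re_add_abs_im _
        _ < a + y₀ := by rw [Complex.sub_re, Complex.sub_im]; exact add_lt_add h1 h2
    have key : dist (z : ℂ) (z₀ : ℂ) / (2 * Real.sqrt (z.im * z₀.im)) < Real.sinh (ρ / 2) := by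
      have h1 : dist (z : ℂ) (z₀ : ℂ) / (2 * Real.sqrt (z.im * z₀.im))
          ≤ dist (z : ℂ) (z₀ : ℂ) / (2 * y₀) := by
        apply div_le_div_of_nonneg_left dist_nonneg (by positivity)
        rw [← hy₀def]; linarith
      have h2 : dist (z : ℂ) (z₀ : ℂ) / (2 * y₀) < Real.sinh (ρ / 2) := by
        rw [div_lt_iff₀ (by positivity)]
        nlinarith
      exact h1.trans_lt h2
    calc 2 * Real.arsinh (dist (z : ℂ) (z₀ : ℂ) / (2 * Real.sqrt (z.im * z₀.im)))
        < 2 * Real.arsinh (Real.sinh (ρ / 2)) := by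
          have := Real.arsinh_lt_arsinh.mpr key
          linarith
      _ = ρ := by rw [Real.arsinh_sinh]; ring
  -- measure of R
  have hemb : MeasurableEmbedding ((↑) : ℍ → ℂ) :=
    UpperHalfPlane.isOpenEmbedding_coe.measurableEmbedding
  have himage : ((↑) : ℍ → ℂ) '' R = T := by
    rw [hRdef, Set.image_preimage_eq_inter_range]
    apply Set.inter_eq_self_of_subset_left
    rintro w ⟨-, him1, -⟩
    exact ⟨⟨w, by linarith⟩, rfl⟩
  have hRmeas : hypMeasure R =
      ((volume : Measure ℂ).withDensity fun z => ENNReal.ofReal (1 / z.im ^ 2)) T := by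
    rw [hypMeasure, hemb.comap_apply, himage]
  -- volume of T
  have hvolT : (volume : Measure ℂ) T = ENNReal.ofReal (2 * a) * ENNReal.ofReal y₀ := by
    have hTeq : T = Complex.measurableEquivRealProd ⁻¹'
        (Set.Ioo (z₀.re - a) (z₀.re + a) ×ˢ Set.Ioo y₀ (2 * y₀)) := by
      rfl
    rw [hTeq, Complex.volume_preserving_equiv_real_prod.measure_preimage
        ((measurableSet_Ioo.prod measurableSet_Ioo).nullMeasurableSet)]
    rw [show (volume : Measure (ℝ × ℝ)) = (volume : Measure ℝ).prod volume from rfl,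
      Measure.prod_prod, Real.volume_Ioo, Real.volume_Ioo]
    congr 1 <;> [skip; skip] <;> congr 1 <;> ring
  -- lower bound for the measure of T
  have hlow : ENNReal.ofReal (1 / (2 * y₀) ^ 2) * (volume : Measure ℂ) T ≤
      ((volume : Measure ℂ).withDensity fun z => ENNReal.ofReal (1 / z.im ^ 2)) T := by
    rw [withDensity_apply _ hTmeas, ← setLIntegral_const T (ENNReal.ofReal (1 / (2 * y₀) ^ 2)),
      mul_comm] at *
    · exact setLIntegral_mono' hTmeas fun w ⟨_, _, hw2⟩ => by
        apply ENNReal.ofReal_le_ofReal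
        have hw : 0 < w.im := lt_trans hy₀ (by linarith)
        apply div_le_div_of_nonneg_left one_pos.le (by positivity)
        nlinarith
  -- final arithmetic
  have harith : Real.exp (ρ / 3) ≤ 1 / (2 * y₀) ^ 2 * (2 * a * y₀) := by
    have h1 : 1 / (2 * y₀) ^ 2 * (2 * a * y₀) = Real.sinh (ρ / 2) / 2 := by
      rw [hadef]; field_simp
    rw [h1, Real.sinh_eq]
    have he2 : (5 : ℝ) ≤ Real.exp 2 := by
      have h := Real.exp_one_gt_d9
      have : Real.exp 2 = Real.exp 1 * Real.exp 1 := by rw [← Real.exp_add]; norm_num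
      nlinarith
    have he6 : Real.exp 2 ≤ Real.exp (ρ / 6) := Real.exp_le_exp.mpr (by linarith)
    have hsplit : Real.exp (ρ / 2) = Real.exp (ρ / 3) * Real.exp (ρ / 6) := by
      rw [← Real.exp_add]; ring_nf
    have hneg : Real.exp (-(ρ / 2)) ≤ 1 := Real.exp_le_one_iff.mpr (by linarith)
    have hpos : (1 : ℝ) ≤ Real.exp (ρ / 3) := Real.one_le_exp (by linarith)
    nlinarith
  calc ENNReal.ofReal (Real.exp (ρ / 3))
      ≤ ENNReal.ofReal (1 / (2 * y₀) ^ 2 * (2 * a * y₀)) := ENNReal.ofReal_le_ofReal harith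
    _ = ENNReal.ofReal (1 / (2 * y₀) ^ 2) * (ENNReal.ofReal (2 * a) * ENNReal.ofReal y₀) := by
        rw [← ENNReal.ofReal_mul (by positivity), ← ENNReal.ofReal_mul (by positivity)]
    _ = ENNReal.ofReal (1 / (2 * y₀) ^ 2) * (volume : Measure ℂ) T := by rw [hvolT]
    _ ≤ ((volume : Measure ℂ).withDensity fun z => ENNReal.ofReal (1 / z.im ^ 2)) T := hlow
    _ = hypMeasure R := hRmeas.symm
    _ ≤ hypMeasure {z : ℍ | dist z z₀ < ρ ∧ z₀.im < z.im} := measure_mono hRsub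
end
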